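/- There exists a constant C > 0 such that for every ε > 0, every function u : ℤ³ → ℂ with u(0) = 0 and |u(α)| ≤ ε/|α|² for all α ≠ 0, and every k ∈ ℤ³ with k ≠ 0, one has Σ_{α ∈ ℤ³, 0 < |α| ≤ 2|k|} |α|·|u(α)|·|u(k−α)| + |k|·Σ_{α ∈ ℤ³, |α| > 2|k|} |u(α)|·|u(k−α)| ≤ C·ε². -/

import Mathlib

open scoped ENNReal

/-- The Euclidean norm of a lattice point in `ℤ³`. -/
noncomputable def znorm (a : Fin 3 → ℤ) : ℝ := Real.sqrt (∑ i, ((a i : ℝ)) ^ 2)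

namespace NLB

/-- The sup norm of a lattice point, as a natural number. -/
def nsup (a : Fin 3 → ℤ) : ℕ := Finset.univ.sup fun i => (a i).natAbs

lemma znorm_nonneg (a : Fin 3 → ℤ) : 0 ≤ znorm a := Real.sqrt_nonneg _

lemma znorm_zero : znorm 0 = 0 := by simp [znorm]

lemma abs_le_znorm (a : Fin 3 → ℤ) (i : Fin 3) : |(a i : ℝ)| ≤ znorm a := by
  rw [← Real.sqrt_sq_eq_abs]
  exact Real.sqrt_le_sqrt (Finset.single_le_sum (f := fun j => ((a j : ℝ)) ^ 2)
    (fun j _ => sq_nonneg _) (Finset.mem_univ i))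

lemma natAbs_cast_eq_abs (n : ℤ) : ((n.natAbs : ℝ)) = |(n : ℝ)| := by
  rw [Nat.cast_natAbs, Int.cast_abs]

lemma nsup_le_znorm (a : Fin 3 → ℤ) : (nsup a : ℝ) ≤ znorm a := by
  obtain ⟨i, -, hi⟩ := Finset.exists_mem_eq_sup Finset.univ
    ⟨0, Finset.mem_univ 0⟩ (fun i => (a i).natAbs)
  rw [nsup, hi, natAbs_cast_eq_abs]
  exact abs_le_znorm a i

lemma abs_le_nsup (a : Fin 3 → ℤ) (i : Fin 3) : |(a i : ℝ)| ≤ (nsup a : ℝ) := by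
  rw [← natAbs_cast_eq_abs]
  exact_mod_cast Finset.le_sup (f := fun i => (a i).natAbs) (Finset.mem_univ i)

lemma znorm_le_two_nsup (a : Fin 3 → ℤ) : znorm a ≤ 2 * (nsup a : ℝ) := by
  have hb : ∀ i : Fin 3, ((a i : ℝ)) ^ 2 ≤ ((nsup a : ℝ)) ^ 2 := by
    intro i
    calc ((a i : ℝ)) ^ 2 = |(a i : ℝ)| ^ 2 := (sq_abs _).symm
      _ ≤ _ := pow_le_pow_left₀ (abs_nonneg _) (abs_le_nsup a i) 2
  have h : ∑ i, ((a i : ℝ)) ^ 2 ≤ (2 * (nsup a : ℝ)) ^ 2 := by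
    calc ∑ i, ((a i : ℝ)) ^ 2 ≤ ∑ _i : Fin 3, ((nsup a : ℝ)) ^ 2 :=
          Finset.sum_le_sum fun i _ => hb i
      _ = 3 * ((nsup a : ℝ)) ^ 2 := by simp
      _ ≤ (2 * (nsup a : ℝ)) ^ 2 := by nlinarith [sq_nonneg ((nsup a : ℝ))]
  calc znorm a ≤ Real.sqrt ((2 * (nsup a : ℝ)) ^ 2) := Real.sqrt_le_sqrt h
    _ = 2 * (nsup a : ℝ) := Real.sqrt_sq (by positivity)

lemma one_le_nsup {a : Fin 3 → ℤ} (ha : a ≠ 0) : 1 ≤ nsup a := by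
  obtain ⟨i, hi⟩ := Function.ne_iff.mp ha
  have h1 : 1 ≤ (a i).natAbs := Int.natAbs_pos.mpr hi
  exact le_trans h1 (Finset.le_sup (f := fun i => (a i).natAbs) (Finset.mem_univ i))

lemma one_le_znorm {a : Fin 3 → ℤ} (ha : a ≠ 0) : 1 ≤ znorm a := by
  refine le_trans ?_ (nsup_le_znorm a)
  exact_mod_cast one_le_nsup ha

noncomputable def vec (a : Fin 3 → ℤ) : EuclideanSpace ℝ (Fin 3) :=
  (WithLp.equiv 2 (Fin 3 → ℝ)).symm (fun i => (a i : ℝ))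

lemma znorm_eq_norm (a : Fin 3 → ℤ) : znorm a = ‖vec a‖ := by
  rw [vec, EuclideanSpace.norm_eq]
  unfold znorm
  congr 1
  refine Finset.sum_congr rfl fun i _ => ?_
  show _ = ‖(a i : ℝ)‖ ^ 2
  rw [Real.norm_eq_abs, sq_abs]

lemma vec_add (a b : Fin 3 → ℤ) : vec (a + b) = vec a + vec b := by
  rw [vec, vec, vec, WithLp.equiv_symm_apply, ← WithLp.toLp_add]
  congr 1
  funext i
  show ((a i + b i : ℤ) : ℝ) = (a i : ℝ) + (b i : ℝ)
  push_cast; ring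

lemma znorm_triangle (a b : Fin 3 → ℤ) : znorm (a + b) ≤ znorm a + znorm b := by
  rw [znorm_eq_norm, znorm_eq_norm, znorm_eq_norm, vec_add]
  exact norm_add_le _ _

lemma znorm_neg (a : Fin 3 → ℤ) : znorm (-a) = znorm a := by
  unfold znorm
  congr 1
  refine Finset.sum_congr rfl fun i _ => ?_
  show (((-a) i : ℤ) : ℝ) ^ 2 = _
  push_cast [Pi.neg_apply]
  ring

lemma znorm_k_le (k α : Fin 3 → ℤ) : znorm k ≤ znorm (k - α) + znorm α := by
  have := znorm_triangle (k - α) α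
  simpa using this

lemma znorm_sub_ge (k α : Fin 3 → ℤ) : znorm α - znorm k ≤ znorm (k - α) := by
  have h := znorm_triangle (α - k) k
  simp only [sub_add_cancel] at h
  have h2 : znorm (α - k) = znorm (k - α) := by rw [← znorm_neg (α - k), neg_sub]
  linarith


noncomputable def cube (n : ℕ) : Finset (Fin 3 → ℤ) := Fintype.piFinset fun _ => Finset.Icc (-(n : ℤ)) (n : ℤ)

lemma mem_cube {n : ℕ} {a : Fin 3 → ℤ} : a ∈ cube n ↔ nsup a ≤ n := by
  simp only [cube, Fintype.mem_piFinset, Finset.mem_Icc, nsup, Finset.sup_le_iff,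
    Finset.mem_univ, forall_true_left]
  refine forall_congr' fun i => ?_
  omega

lemma card_cube (n : ℕ) : (cube n).card = (2 * n + 1) ^ 3 := by
  rw [cube, Fintype.card_piFinset]
  have h : ∀ _i : Fin 3, (Finset.Icc (-(n : ℤ)) (n : ℤ)).card = 2 * n + 1 := by
    intro i
    rw [Int.card_Icc]
    omega
  rw [Finset.prod_congr rfl fun i _ => h i, Finset.prod_const, Finset.card_univ, Fintype.card_fin]

lemma card_shell (m : ℕ) : (cube (m + 1) \ cube m).card ≤ 54 * (m + 1) ^ 2 := by
  rw [Finset.card_sdiff_of_subset (by intro a ha; rw [mem_cube] at *; omega)]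
  rw [card_cube, card_cube]
  have h : (2 * (m + 1) + 1) ^ 3 ≤ (2 * m + 1) ^ 3 + 54 * (m + 1) ^ 2 := by ring_nf; omega
  omega

lemma fiber_subset (m : ℕ) :
    {a : Fin 3 → ℤ | nsup a = m + 1} ⊆ ↑(cube (m + 1) \ cube m) := by
  intro a ha
  simp only [Set.mem_setOf_eq] at ha
  simp only [Finset.coe_sdiff, Set.mem_diff, Finset.mem_coe, mem_cube]
  omega

lemma master (g : ℕ → ℝ≥0∞) (hg : g 0 = 0) :
    ∑' a : Fin 3 → ℤ, g (nsup a) ≤ ∑' n : ℕ, 54 * (n : ℝ≥0∞) ^ 2 * g n := by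
  rw [← (Equiv.sigmaFiberEquiv nsup).tsum_eq (fun a => g (nsup a))]
  rw [ENNReal.tsum_sigma']
  refine ENNReal.tsum_le_tsum fun n => ?_
  have h1 : ∑' b : {a : Fin 3 → ℤ // nsup a = n}, g (nsup ((Equiv.sigmaFiberEquiv nsup) ⟨n, b⟩))
      = ∑' _b : {a : Fin 3 → ℤ // nsup a = n}, g n := by
    refine tsum_congr fun b => ?_
    show g (nsup b.1) = g n
    rw [b.2]
  rw [h1]
  have h2 : ∑' _b : {a : Fin 3 → ℤ // nsup a = n}, g n
      = ∑' a : Fin 3 → ℤ, Set.indicator {a | nsup a = n} (fun _ => g n) a :=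
    tsum_subtype {a | nsup a = n} (fun _ => g n)
  rw [h2]
  match n with
  | 0 =>
    simp only [hg]
    simp
  | m + 1 =>
    calc ∑' a : Fin 3 → ℤ, Set.indicator {a | nsup a = m + 1} (fun _ => g (m + 1)) a
        ≤ ∑' a : Fin 3 → ℤ, Set.indicator ↑(cube (m + 1) \ cube m) (fun _ => g (m + 1)) a := by
          refine ENNReal.tsum_le_tsum fun a => ?_
          exact Set.indicator_le_indicator_of_subset (fiber_subset m) (fun _ => zero_le) a
      _ = ∑ _a ∈ cube (m + 1) \ cube m, g (m + 1) := (sum_eq_tsum_indicator _ _).symm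
      _ = ((cube (m + 1) \ cube m).card : ℝ≥0∞) * g (m + 1) := by
          rw [Finset.sum_const, nsmul_eq_mul]
      _ ≤ ((54 * (m + 1) ^ 2 : ℕ) : ℝ≥0∞) * g (m + 1) := by
          refine mul_le_mul' ?_ le_rfl
          exact_mod_cast card_shell m
      _ = 54 * (((m + 1 : ℕ)) : ℝ≥0∞) ^ 2 * g (m + 1) := by push_cast; ring


lemma inv_pow_cast (p n : ℕ) (hn : 0 < n) :
    ((n : ℝ≥0∞) ^ p)⁻¹ = ENNReal.ofReal (1 / (n : ℝ) ^ p) := by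
  have h0 : (0:ℝ) < (n : ℝ) ^ p := by positivity
  rw [one_div, ENNReal.ofReal_inv_of_pos h0, ENNReal.ofReal_pow (by positivity),
    ENNReal.ofReal_natCast]

lemma sumA (M : ℕ) :
    ∑' n : ℕ, 54 * (n : ℝ≥0∞) ^ 2 * (if 1 ≤ n ∧ n ≤ M then ((n : ℝ≥0∞))⁻¹ else 0)
      ≤ 54 * (M : ℝ≥0∞) ^ 2 := by
  rw [tsum_eq_sum (s := Finset.Icc 1 M) ?_]
  · refine le_trans (Finset.sum_le_card_nsmul _ _ (54 * (M : ℝ≥0∞)) ?_) ?_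
    · intro n hn
      rw [Finset.mem_Icc] at hn
      rw [if_pos hn]
      have hn0 : (n : ℝ≥0∞) ≠ 0 := Nat.cast_ne_zero.mpr (by omega)
      have hkey : (n : ℝ≥0∞) ^ 2 * ((n : ℝ≥0∞))⁻¹ = (n : ℝ≥0∞) := by
        rw [sq, mul_assoc, ENNReal.mul_inv_cancel hn0 (by simp), mul_one]
      calc 54 * (n : ℝ≥0∞) ^ 2 * ((n : ℝ≥0∞))⁻¹ = 54 * (n : ℝ≥0∞) := by
            rw [mul_assoc, hkey]
        _ ≤ 54 * (M : ℝ≥0∞) := by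
            refine mul_le_mul' le_rfl ?_
            exact_mod_cast hn.2
    · rw [Nat.card_Icc]
      simp only [Nat.add_sub_cancel, nsmul_eq_mul]
      calc (M : ℝ≥0∞) * (54 * (M : ℝ≥0∞)) = 54 * (M : ℝ≥0∞) ^ 2 := by ring
        _ ≤ _ := le_rfl
  · intro n hn
    rw [Finset.mem_Icc] at hn
    rw [if_neg hn, mul_zero]

lemma sumB (M : ℕ) :
    ∑' n : ℕ, 54 * (n : ℝ≥0∞) ^ 2 * (if 1 ≤ n ∧ n ≤ M then ((n : ℝ≥0∞) ^ 2)⁻¹ else 0)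
      ≤ 54 * (M : ℝ≥0∞) := by
  rw [tsum_eq_sum (s := Finset.Icc 1 M) ?_]
  · refine le_trans (Finset.sum_le_card_nsmul _ _ 54 ?_) ?_
    · intro n hn
      rw [Finset.mem_Icc] at hn
      rw [if_pos hn]
      have hn0 : (n : ℝ≥0∞) ≠ 0 := by exact_mod_cast Nat.one_le_iff_ne_zero.mp hn.1
      have hkey : (n : ℝ≥0∞) ^ 2 * ((n : ℝ≥0∞) ^ 2)⁻¹ = 1 :=
        ENNReal.mul_inv_cancel (by positivity) (by simp)
      rw [mul_assoc, hkey, mul_one]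
    · rw [Nat.card_Icc]
      simp only [Nat.add_sub_cancel, nsmul_eq_mul]
      rw [mul_comm]
  · intro n hn
    rw [Finset.mem_Icc] at hn
    rw [if_neg hn, mul_zero]

lemma real_tail_sum (l B : ℕ) :
    ∑ n ∈ Finset.Icc (l + 2) B, (1 : ℝ) / (n : ℝ) ^ 2 ≤ 1 / ((l + 1 : ℕ) : ℝ) := by
  rw [← Finset.Ico_add_one_right_eq_Icc, Finset.sum_Ico_eq_sum_range]
  set f : ℕ → ℝ := fun j => 1 / ((l : ℝ) + 1 + j) with hf
  have hterm : ∀ j : ℕ, (1 : ℝ) / ((l + 2 + j : ℕ) : ℝ) ^ 2 ≤ f j - f (j + 1) := by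
    intro j
    set x : ℝ := (l : ℝ) + 1 + j with hx
    have hx0 : 0 < x := by positivity
    have hx1 : 0 < x + 1 := by positivity
    have h1 : ((l + 2 + j : ℕ) : ℝ) = x + 1 := by push_cast; ring
    have h2 : f (j + 1) = 1 / (x + 1) := by rw [hf]; push_cast; rw [hx]; ring
    rw [h1, h2]
    have h3 : (1:ℝ) / (x + 1) ^ 2 ≤ 1 / (x * (x + 1)) := by
      apply one_div_le_one_div_of_le (by positivity)
      nlinarith
    have h4 : 1 / (x * (x + 1)) = 1 / x - 1 / (x + 1) := by
      field_simp
      ring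
    rw [hf]
    calc (1:ℝ) / (x + 1) ^ 2 ≤ 1 / (x * (x + 1)) := h3
      _ = 1 / x - 1 / (x + 1) := h4
      _ = _ := by rw [hx]
  calc ∑ j ∈ Finset.range (B + 1 - (l + 2)), (1 : ℝ) / ((l + 2 + j : ℕ) : ℝ) ^ 2
      ≤ ∑ j ∈ Finset.range (B + 1 - (l + 2)), (f j - f (j + 1)) :=
        Finset.sum_le_sum fun j _ => hterm j
    _ = f 0 - f (B + 1 - (l + 2)) := Finset.sum_range_sub' f _
    _ ≤ f 0 := by
        have : 0 ≤ f (B + 1 - (l + 2)) := by rw [hf]; positivity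
        linarith
    _ = 1 / ((l + 1 : ℕ) : ℝ) := by rw [hf]; push_cast; norm_num

lemma tail_le (m : ℕ) (hm : 2 ≤ m) :
    ∑' n : ℕ, (if m ≤ n then ((n : ℝ≥0∞) ^ 2)⁻¹ else 0) ≤ (((m - 1 : ℕ)) : ℝ≥0∞)⁻¹ := by
  obtain ⟨l, rfl⟩ : ∃ l, m = l + 2 := ⟨m - 2, by omega⟩
  set f : ℕ → ℝ := fun n => if l + 2 ≤ n then 1 / (n : ℝ) ^ 2 else 0 with hf
  have hnn : ∀ n, 0 ≤ f n := by
    intro n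
    rw [hf]
    dsimp only
    split_ifs
    · positivity
    · exact le_rfl
  have hsum : Summable f := by
    refine Summable.of_nonneg_of_le hnn (fun n => ?_)
      ((Real.summable_one_div_nat_pow (p := 2)).mpr one_lt_two)
    rw [hf]
    dsimp only
    split_ifs
    · exact le_rfl
    · positivity
  have hle : ∑' n, f n ≤ 1 / ((l + 1 : ℕ) : ℝ) := by
    refine Summable.tsum_le_of_sum_le hsum fun s => ?_
    have h1 : ∑ n ∈ s, f n = ∑ n ∈ s.filter (fun n => l + 2 ≤ n), f n := by
      refine (Finset.sum_filter_of_ne fun x _ hx => ?_).symm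
      by_contra h
      rw [hf] at hx
      simp only [if_neg h] at hx
      exact hx rfl
    rw [h1]
    have h2 : s.filter (fun n => l + 2 ≤ n) ⊆ Finset.Icc (l + 2) (s.sup id) := by
      intro x hx
      rw [Finset.mem_filter] at hx
      rw [Finset.mem_Icc]
      exact ⟨hx.2, Finset.le_sup (f := id) hx.1⟩
    calc ∑ n ∈ s.filter (fun n => l + 2 ≤ n), f n
        ≤ ∑ n ∈ Finset.Icc (l + 2) (s.sup id), f n :=
          Finset.sum_le_sum_of_subset_of_nonneg h2 fun n _ _ => hnn n
      _ ≤ ∑ n ∈ Finset.Icc (l + 2) (s.sup id), (1:ℝ) / (n : ℝ) ^ 2 := by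
          refine Finset.sum_le_sum fun n hn => ?_
          rw [hf]
          dsimp only
          split_ifs
          · exact le_rfl
          · positivity
      _ ≤ 1 / ((l + 1 : ℕ) : ℝ) := real_tail_sum l _
  have heq : ∀ n : ℕ, (if l + 2 ≤ n then ((n : ℝ≥0∞) ^ 2)⁻¹ else 0) = ENNReal.ofReal (f n) := by
    intro n
    rw [hf]
    dsimp only
    split_ifs with h
    · exact inv_pow_cast 2 n (by omega)
    · simp
  calc ∑' n : ℕ, (if l + 2 ≤ n then ((n : ℝ≥0∞) ^ 2)⁻¹ else 0)
      = ∑' n, ENNReal.ofReal (f n) := tsum_congr heq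
    _ = ENNReal.ofReal (∑' n, f n) := (ENNReal.ofReal_tsum_of_nonneg hnn hsum).symm
    _ ≤ ENNReal.ofReal (1 / ((l + 1 : ℕ) : ℝ)) := ENNReal.ofReal_le_ofReal hle
    _ = (((l + 2 - 1 : ℕ)) : ℝ≥0∞)⁻¹ := by
        have h2 : (l + 2 - 1 : ℕ) = l + 1 := by omega
        rw [h2, one_div, ENNReal.ofReal_inv_of_pos (by positivity), ENNReal.ofReal_natCast]

lemma sumC (m : ℕ) (hm : 2 ≤ m) :
    ∑' n : ℕ, 54 * (n : ℝ≥0∞) ^ 2 * (if m ≤ n then ((n : ℝ≥0∞) ^ 4)⁻¹ else 0)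
      ≤ 54 * (((m - 1 : ℕ)) : ℝ≥0∞)⁻¹ := by
  have h1 : ∀ n : ℕ, 54 * (n : ℝ≥0∞) ^ 2 * (if m ≤ n then ((n : ℝ≥0∞) ^ 4)⁻¹ else 0)
      ≤ 54 * (if m ≤ n then ((n : ℝ≥0∞) ^ 2)⁻¹ else 0) := by
    intro n
    split_ifs with h
    · have hn0 : (n : ℝ≥0∞) ≠ 0 := Nat.cast_ne_zero.mpr (by omega)
      have hp4 : (n : ℝ≥0∞) ^ 4 = (n : ℝ≥0∞) ^ 2 * (n : ℝ≥0∞) ^ 2 := by ring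
      rw [hp4, ENNReal.mul_inv (Or.inl (pow_ne_zero 2 hn0)) (Or.inl (by simp))]
      calc 54 * (n : ℝ≥0∞) ^ 2 * (((n : ℝ≥0∞) ^ 2)⁻¹ * ((n : ℝ≥0∞) ^ 2)⁻¹)
          = 54 * ((n : ℝ≥0∞) ^ 2 * ((n : ℝ≥0∞) ^ 2)⁻¹) * ((n : ℝ≥0∞) ^ 2)⁻¹ := by ring
        _ = 54 * ((n : ℝ≥0∞) ^ 2)⁻¹ := by
            rw [ENNReal.mul_inv_cancel (pow_ne_zero 2 hn0) (by simp), mul_one]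
        _ ≤ 54 * ((n : ℝ≥0∞) ^ 2)⁻¹ := le_rfl
    · simp
  refine le_trans (ENNReal.tsum_le_tsum h1) ?_
  rw [ENNReal.tsum_mul_left]
  exact mul_le_mul' le_rfl (tail_le m hm)

lemma conv {ι : Type*} (f : ι → ℝ) (hf : ∀ i, 0 ≤ f i) {c : ℝ} (hc : 0 ≤ c)
    (h : ∑' i, ENNReal.ofReal (f i) ≤ ENNReal.ofReal c) :
    Summable f ∧ ∑' i, f i ≤ c := by
  have hne : ∑' i, ENNReal.ofReal (f i) ≠ ⊤ := (h.trans_lt ENNReal.ofReal_lt_top).ne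
  have hsumm : Summable f :=
    (ENNReal.summable_toReal hne).congr fun i => ENNReal.toReal_ofReal (hf i)
  refine ⟨hsumm, ?_⟩
  have h2 : ∑' i, f i = (∑' i, ENNReal.ofReal (f i)).toReal := by
    rw [ENNReal.tsum_toReal_eq (fun i => ENNReal.ofReal_ne_top)]
    exact tsum_congr fun i => (ENNReal.toReal_ofReal (hf i)).symm
  rw [h2]
  calc (∑' i, ENNReal.ofReal (f i)).toReal ≤ (ENNReal.ofReal c).toReal :=
        ENNReal.toReal_mono ENNReal.ofReal_ne_top h
    _ = c := ENNReal.toReal_ofReal hc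


lemma bound_via_shells (f : (Fin 3 → ℤ) → ℝ≥0∞) (P : (Fin 3 → ℤ) → Prop) (g : ℕ → ℝ≥0∞)
    (hg : g 0 = 0) (h : ∀ α, P α → f α ≤ g (nsup α)) :
    ∑' α : {a : Fin 3 → ℤ // P a}, f α.1 ≤ ∑' n : ℕ, 54 * (n : ℝ≥0∞) ^ 2 * g n := by
  have h0 : ∑' α : {a : Fin 3 → ℤ // P a}, f α.1
      = ∑' a : Fin 3 → ℤ, Set.indicator {a | P a} f a := tsum_subtype {a | P a} f
  rw [h0]
  refine le_trans (ENNReal.tsum_le_tsum fun a => ?_) (master g hg)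
  by_cases ha : a ∈ {a | P a}
  · rw [Set.indicator_of_mem ha]
    exact h a ha
  · rw [Set.indicator_of_notMem ha]
    exact zero_le

section Chains

variable {u : (Fin 3 → ℤ) → ℂ} {k : Fin 3 → ℤ} {ε : ℝ}

lemma chain2 (hε : 0 < ε) (hk : k ≠ 0)
    (hub : ∀ α, ‖u α‖ ≤ ε / znorm α ^ 2) :
    ∑' α : {a : Fin 3 → ℤ // 2 * znorm k < znorm a},
        ENNReal.ofReal (znorm k * (‖u α.1‖ * ‖u (k - α.1)‖))
      ≤ ENNReal.ofReal (432 * ε ^ 2) := by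
  set K := znorm k with hKdef
  have hK1 : 1 ≤ K := one_le_znorm hk
  have hK0 : 0 < K := lt_of_lt_of_le one_pos hK1
  set M2 := ⌊K⌋₊ with hM2def
  have hM2_1 : 1 ≤ M2 := Nat.le_floor (by exact_mod_cast hK1)
  have hM2K : (M2 : ℝ) ≤ K := Nat.floor_le hK0.le
  have hM2pos : (0 : ℝ) < (M2 : ℝ) := by exact_mod_cast hM2_1
  have hKM2 : K ≤ 2 * (M2 : ℝ) := by
    rcases le_or_gt 2 K with h | h
    · have h2 := Nat.lt_floor_add_one K
      rw [← hM2def] at h2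
      linarith
    · have h1 : (1 : ℝ) ≤ (M2 : ℝ) := by exact_mod_cast hM2_1
      linarith
  set c3 := 4 * K * ε ^ 2 with hc3def
  have hc3 : 0 ≤ c3 := by positivity
  have hdom : ∀ a : Fin 3 → ℤ, 2 * K < znorm a →
      ENNReal.ofReal (K * (‖u a‖ * ‖u (k - a)‖))
        ≤ ENNReal.ofReal c3 * (if M2 + 1 ≤ nsup a then ((nsup a : ℝ≥0∞) ^ 4)⁻¹ else 0) := by
    intro a ha
    have ha0 : (0 : ℝ) < znorm a := by linarith
    have h2n : znorm a ≤ 2 * (nsup a : ℝ) := znorm_le_two_nsup a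
    have hKn : K < (nsup a : ℝ) := by linarith
    have hmn : M2 + 1 ≤ nsup a := by
      have := (Nat.floor_lt hK0.le).mpr hKn
      omega
    have hnpos : (0 : ℝ) < (nsup a : ℝ) := lt_trans hK0 hKn
    have hb : znorm a - K ≤ znorm (k - a) := znorm_sub_ge k a
    have hb2 : znorm a / 2 ≤ znorm (k - a) := by linarith
    have hb0 : 0 < znorm (k - a) := by linarith
    have hreal : K * (‖u a‖ * ‖u (k - a)‖) ≤ c3 * (1 / (nsup a : ℝ) ^ 4) := by
      have h1 : ‖u a‖ ≤ ε / znorm a ^ 2 := hub a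
      have h2 : ‖u (k - a)‖ ≤ ε / (znorm a / 2) ^ 2 := by
        refine (hub (k - a)).trans ?_
        refine div_le_div_of_nonneg_left hε.le (by positivity) ?_
        nlinarith
      calc K * (‖u a‖ * ‖u (k - a)‖)
          ≤ K * ((ε / znorm a ^ 2) * (ε / (znorm a / 2) ^ 2)) := by
            refine mul_le_mul_of_nonneg_left ?_ hK0.le
            exact mul_le_mul h1 h2 (norm_nonneg _) (by positivity)
        _ = 4 * K * ε ^ 2 * (1 / znorm a ^ 4) := by
            field_simp
            ring
        _ ≤ c3 * (1 / (nsup a : ℝ) ^ 4) := by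
            rw [hc3def]
            refine mul_le_mul_of_nonneg_left ?_ (by positivity)
            refine one_div_le_one_div_of_le (by positivity) ?_
            exact pow_le_pow_left₀ (by positivity) (nsup_le_znorm a) 4
    rw [if_pos hmn, inv_pow_cast 4 (nsup a) (by omega), ← ENNReal.ofReal_mul hc3]
    exact ENNReal.ofReal_le_ofReal hreal
  calc ∑' α : {a : Fin 3 → ℤ // 2 * K < znorm a},
        ENNReal.ofReal (K * (‖u α.1‖ * ‖u (k - α.1)‖))
      ≤ ∑' n : ℕ, 54 * (n : ℝ≥0∞) ^ 2 *
          (ENNReal.ofReal c3 * (if M2 + 1 ≤ n then ((n : ℝ≥0∞) ^ 4)⁻¹ else 0)) :=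
        bound_via_shells _ _
          (fun n => ENNReal.ofReal c3 * (if M2 + 1 ≤ n then ((n : ℝ≥0∞) ^ 4)⁻¹ else 0))
          (by simp) hdom
    _ = ENNReal.ofReal c3 * ∑' n : ℕ, 54 * (n : ℝ≥0∞) ^ 2 *
          (if M2 + 1 ≤ n then ((n : ℝ≥0∞) ^ 4)⁻¹ else 0) := by
        rw [← ENNReal.tsum_mul_left]
        exact tsum_congr fun n => by ring
    _ ≤ ENNReal.ofReal c3 * (54 * (((M2 + 1 - 1 : ℕ)) : ℝ≥0∞)⁻¹) :=
        mul_le_mul' le_rfl (sumC (M2 + 1) (by omega))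
    _ ≤ ENNReal.ofReal (432 * ε ^ 2) := by
        have hsimp : (M2 + 1 - 1 : ℕ) = M2 := by omega
        rw [hsimp]
        have hc : ((M2 : ℝ≥0∞))⁻¹ = ENNReal.ofReal (1 / (M2 : ℝ)) := by
          simpa using inv_pow_cast 1 M2 (by omega)
        rw [hc]
        have heq : ENNReal.ofReal c3 * (54 * ENNReal.ofReal (1 / (M2 : ℝ)))
            = ENNReal.ofReal (c3 * (54 * (1 / (M2 : ℝ)))) := by
          rw [ENNReal.ofReal_mul hc3, ENNReal.ofReal_mul (by norm_num : (0:ℝ) ≤ 54),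
            ENNReal.ofReal_ofNat]
        rw [heq]
        refine ENNReal.ofReal_le_ofReal ?_
        have h12 : (1 : ℝ) / (M2 : ℝ) ≤ 2 / K := by
          rw [div_le_div_iff₀ hM2pos hK0]
          linarith
        have h13 : (54 : ℝ) * (1 / (M2 : ℝ)) ≤ 54 * (2 / K) :=
          mul_le_mul_of_nonneg_left h12 (by norm_num)
        calc c3 * (54 * (1 / (M2 : ℝ))) ≤ c3 * (54 * (2 / K)) :=
              mul_le_mul_of_nonneg_left h13 hc3
          _ = 432 * ε ^ 2 := by
              rw [hc3def]
              field_simp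
              ring

lemma chain1 (hε : 0 < ε) (hk : k ≠ 0) (hu0 : u 0 = 0)
    (hub : ∀ α, ‖u α‖ ≤ ε / znorm α ^ 2) :
    ∑' α : {a : Fin 3 → ℤ // 0 < znorm a ∧ znorm a ≤ 2 * znorm k},
        ENNReal.ofReal (znorm α.1 * ‖u α.1‖ * ‖u (k - α.1)‖)
      ≤ ENNReal.ofReal (972 * ε ^ 2) := by
  set K := znorm k with hKdef
  have hK1 : 1 ≤ K := one_le_znorm hk
  have hK0 : 0 < K := lt_of_lt_of_le one_pos hK1
  set M1 := ⌊2 * K⌋₊ with hM1def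
  set M2 := ⌊K⌋₊ with hM2def
  have hM1K : (M1 : ℝ) ≤ 2 * K := Nat.floor_le (by positivity)
  have hM2K : (M2 : ℝ) ≤ K := Nat.floor_le hK0.le
  set c1 := 4 * ε ^ 2 / K ^ 2 with hc1def
  set c2 := 2 * ε ^ 2 / K with hc2def
  have hc1 : 0 ≤ c1 := by rw [hc1def]; positivity
  have hc2 : 0 ≤ c2 := by rw [hc2def]; positivity
  set D1 : (Fin 3 → ℤ) → ℝ :=
    fun a => if K / 2 ≤ znorm (k - a) then c1 * (1 / znorm a) else 0 with hD1def
  set D2 : (Fin 3 → ℤ) → ℝ :=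
    fun a => if znorm (k - a) < K / 2 then c2 * (1 / znorm (k - a) ^ 2) else 0 with hD2def
  have hD1nn : ∀ a, 0 ≤ D1 a := by
    intro a
    simp only [hD1def]
    split_ifs
    · exact mul_nonneg hc1 (one_div_nonneg.mpr (znorm_nonneg a))
    · exact le_rfl
  have hD2nn : ∀ a, 0 ≤ D2 a := by
    intro a
    simp only [hD2def]
    split_ifs
    · exact mul_nonneg hc2 (by positivity)
    · exact le_rfl
  have hpt1 : ∀ a : Fin 3 → ℤ, 0 < znorm a → znorm a ≤ 2 * K →
      znorm a * ‖u a‖ * ‖u (k - a)‖ ≤ D1 a + D2 a := by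
    intro a h0 h2K
    by_cases hka : k - a = 0
    · rw [hka, hu0]
      simp only [norm_zero, mul_zero]
      exact add_nonneg (hD1nn a) (hD2nn a)
    · have hb1 : 1 ≤ znorm (k - a) := one_le_znorm hka
      have hb0 : 0 < znorm (k - a) := lt_of_lt_of_le one_pos hb1
      have hstep : znorm a * ‖u a‖ * ‖u (k - a)‖
          ≤ ε ^ 2 * (1 / znorm a) * (1 / znorm (k - a) ^ 2) := by
        have h1 : ‖u a‖ ≤ ε / znorm a ^ 2 := hub a
        have h2 : ‖u (k - a)‖ ≤ ε / znorm (k - a) ^ 2 := hub (k - a)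
        calc znorm a * ‖u a‖ * ‖u (k - a)‖
            ≤ znorm a * (ε / znorm a ^ 2) * (ε / znorm (k - a) ^ 2) := by
              refine mul_le_mul ?_ h2 (norm_nonneg _)
                (mul_nonneg (znorm_nonneg a) (by positivity))
              exact mul_le_mul_of_nonneg_left h1 h0.le
          _ = ε ^ 2 * (1 / znorm a) * (1 / znorm (k - a) ^ 2) := by
              field_simp
      rcases le_or_gt (K / 2) (znorm (k - a)) with hc | hc
      · have hD1val : D1 a = c1 * (1 / znorm a) := by
          simp only [hD1def]
          rw [if_pos hc]
        have hkey : ε ^ 2 * (1 / znorm a) * (1 / znorm (k - a) ^ 2) ≤ c1 * (1 / znorm a) := by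
          have h4 : 1 / znorm (k - a) ^ 2 ≤ 4 / K ^ 2 := by
            rw [div_le_div_iff₀ (by positivity) (by positivity)]
            nlinarith
          calc ε ^ 2 * (1 / znorm a) * (1 / znorm (k - a) ^ 2)
              ≤ ε ^ 2 * (1 / znorm a) * (4 / K ^ 2) :=
                mul_le_mul_of_nonneg_left h4 (by positivity)
            _ = c1 * (1 / znorm a) := by rw [hc1def]; ring
        rw [hD1val]
        linarith [hD2nn a]
      · have haK : K / 2 ≤ znorm a := by
          have htri := znorm_k_le k a
          linarith
        have hD2val : D2 a = c2 * (1 / znorm (k - a) ^ 2) := by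
          simp only [hD2def]
          rw [if_pos hc]
        have hkey : ε ^ 2 * (1 / znorm a) * (1 / znorm (k - a) ^ 2)
            ≤ c2 * (1 / znorm (k - a) ^ 2) := by
          have h5 : 1 / znorm a ≤ 2 / K := by
            rw [div_le_div_iff₀ h0 hK0]
            linarith
          calc ε ^ 2 * (1 / znorm a) * (1 / znorm (k - a) ^ 2)
              = (1 / znorm a) * (ε ^ 2 * (1 / znorm (k - a) ^ 2)) := by ring
            _ ≤ (2 / K) * (ε ^ 2 * (1 / znorm (k - a) ^ 2)) :=
                mul_le_mul_of_nonneg_right h5 (by positivity)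
            _ = c2 * (1 / znorm (k - a) ^ 2) := by rw [hc2def]; ring
        rw [hD2val]
        linarith [hD1nn a]
  have hdom1 : ∀ a : Fin 3 → ℤ, (0 < znorm a ∧ znorm a ≤ 2 * K) →
      ENNReal.ofReal (D1 a)
        ≤ ENNReal.ofReal c1 * (if 1 ≤ nsup a ∧ nsup a ≤ M1 then ((nsup a : ℝ≥0∞))⁻¹ else 0) := by
    intro a ha
    have hane : a ≠ 0 := by
      intro h
      rw [h, znorm_zero] at ha
      exact lt_irrefl 0 ha.1
    have h1n : 1 ≤ nsup a := one_le_nsup hane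
    have hnpos : (0 : ℝ) < (nsup a : ℝ) := by exact_mod_cast h1n
    have hnM : nsup a ≤ M1 := Nat.le_floor ((nsup_le_znorm a).trans ha.2)
    rw [if_pos ⟨h1n, hnM⟩]
    have hcast : ((nsup a : ℝ≥0∞))⁻¹ = ENNReal.ofReal (1 / (nsup a : ℝ)) := by
      simpa using inv_pow_cast 1 (nsup a) (by omega)
    rw [hcast, ← ENNReal.ofReal_mul hc1]
    refine ENNReal.ofReal_le_ofReal ?_
    have hD1le : D1 a ≤ c1 * (1 / znorm a) := by
      simp only [hD1def]
      split_ifs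
      · exact le_rfl
      · exact mul_nonneg hc1 (one_div_nonneg.mpr (znorm_nonneg a))
    refine hD1le.trans (mul_le_mul_of_nonneg_left ?_ hc1)
    exact one_div_le_one_div_of_le hnpos (nsup_le_znorm a)
  have hdom2 : ∀ b : Fin 3 → ℤ,
      ENNReal.ofReal (D2 (k - b))
        ≤ ENNReal.ofReal c2 *
            (if 1 ≤ nsup b ∧ nsup b ≤ M2 then ((nsup b : ℝ≥0∞) ^ 2)⁻¹ else 0) := by
    intro b
    have hsub : k - (k - b) = b := sub_sub_cancel k b
    have hD2form : D2 (k - b) = if znorm b < K / 2 then c2 * (1 / znorm b ^ 2) else 0 := by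
      simp only [hD2def]
      rw [hsub]
    rw [hD2form]
    by_cases hcond : znorm b < K / 2
    · rw [if_pos hcond]
      by_cases hb : b = 0
      · subst hb
        rw [znorm_zero]
        norm_num
      · have h1n : 1 ≤ nsup b := one_le_nsup hb
        have hnpos : (0 : ℝ) < (nsup b : ℝ) := by exact_mod_cast h1n
        have hnM : nsup b ≤ M2 := by
          apply Nat.le_floor
          calc (nsup b : ℝ) ≤ znorm b := nsup_le_znorm b
            _ ≤ K := by linarith
        rw [if_pos ⟨h1n, hnM⟩, inv_pow_cast 2 (nsup b) (by omega), ← ENNReal.ofReal_mul hc2]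
        refine ENNReal.ofReal_le_ofReal (mul_le_mul_of_nonneg_left ?_ hc2)
        refine one_div_le_one_div_of_le (by positivity) ?_
        exact pow_le_pow_left₀ hnpos.le (nsup_le_znorm b) 2
    · rw [if_neg hcond]
      simp
  have hchainD1 : ∑' α : {a : Fin 3 → ℤ // 0 < znorm a ∧ znorm a ≤ 2 * K},
      ENNReal.ofReal (D1 α.1) ≤ ENNReal.ofReal (864 * ε ^ 2) := by
    calc ∑' α : {a : Fin 3 → ℤ // 0 < znorm a ∧ znorm a ≤ 2 * K}, ENNReal.ofReal (D1 α.1)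
        ≤ ∑' n : ℕ, 54 * (n : ℝ≥0∞) ^ 2 *
            (ENNReal.ofReal c1 * (if 1 ≤ n ∧ n ≤ M1 then ((n : ℝ≥0∞))⁻¹ else 0)) :=
          bound_via_shells _ _
            (fun n => ENNReal.ofReal c1 * (if 1 ≤ n ∧ n ≤ M1 then ((n : ℝ≥0∞))⁻¹ else 0))
            (by simp) hdom1
      _ = ENNReal.ofReal c1 * ∑' n : ℕ, 54 * (n : ℝ≥0∞) ^ 2 *
            (if 1 ≤ n ∧ n ≤ M1 then ((n : ℝ≥0∞))⁻¹ else 0) := by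
          rw [← ENNReal.tsum_mul_left]
          exact tsum_congr fun n => by ring
      _ ≤ ENNReal.ofReal c1 * (54 * (M1 : ℝ≥0∞) ^ 2) := mul_le_mul' le_rfl (sumA M1)
      _ ≤ ENNReal.ofReal (864 * ε ^ 2) := by
          rw [show ((M1 : ℝ≥0∞)) = ENNReal.ofReal (M1 : ℝ) from (ENNReal.ofReal_natCast M1).symm,
            ← ENNReal.ofReal_pow (Nat.cast_nonneg M1),
            show ((54 : ℝ≥0∞)) = ENNReal.ofReal 54 from (ENNReal.ofReal_ofNat 54).symm,
            ← ENNReal.ofReal_mul (by norm_num : (0:ℝ) ≤ 54), ← ENNReal.ofReal_mul hc1]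
          refine ENNReal.ofReal_le_ofReal ?_
          have hM1sq : (M1 : ℝ) ^ 2 ≤ (2 * K) ^ 2 :=
            pow_le_pow_left₀ (Nat.cast_nonneg M1) hM1K 2
          calc c1 * (54 * (M1 : ℝ) ^ 2) ≤ c1 * (54 * (2 * K) ^ 2) := by
                refine mul_le_mul_of_nonneg_left ?_ hc1
                exact mul_le_mul_of_nonneg_left hM1sq (by norm_num)
            _ = 864 * ε ^ 2 := by
                rw [hc1def]
                field_simp
                ring
  have hchainD2 : ∑' α : {a : Fin 3 → ℤ // 0 < znorm a ∧ znorm a ≤ 2 * K},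
      ENNReal.ofReal (D2 α.1) ≤ ENNReal.ofReal (108 * ε ^ 2) := by
    have hstep1 : ∑' α : {a : Fin 3 → ℤ // 0 < znorm a ∧ znorm a ≤ 2 * K},
        ENNReal.ofReal (D2 α.1) ≤ ∑' a : Fin 3 → ℤ, ENNReal.ofReal (D2 a) := by
      have h0 : ∑' α : {a : Fin 3 → ℤ // 0 < znorm a ∧ znorm a ≤ 2 * K},
          ENNReal.ofReal (D2 α.1)
          = ∑' a : Fin 3 → ℤ,
              Set.indicator {a | 0 < znorm a ∧ znorm a ≤ 2 * K}
                (fun a => ENNReal.ofReal (D2 a)) a :=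
        tsum_subtype {a | 0 < znorm a ∧ znorm a ≤ 2 * K} (fun a => ENNReal.ofReal (D2 a))
      rw [h0]
      exact ENNReal.tsum_le_tsum fun a => Set.indicator_le_self' (fun _ _ => zero_le) a
    have hstep2 : ∑' a : Fin 3 → ℤ, ENNReal.ofReal (D2 a)
        = ∑' b : Fin 3 → ℤ, ENNReal.ofReal (D2 (k - b)) := by
      rw [← (Equiv.subLeft k).tsum_eq (fun a => ENNReal.ofReal (D2 a))]
      exact tsum_congr fun b => by simp [Equiv.subLeft]
    have hstep3 : ∑' b : Fin 3 → ℤ, ENNReal.ofReal (D2 (k - b))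
        ≤ ∑' n : ℕ, 54 * (n : ℝ≥0∞) ^ 2 *
            (ENNReal.ofReal c2 * (if 1 ≤ n ∧ n ≤ M2 then ((n : ℝ≥0∞) ^ 2)⁻¹ else 0)) := by
      refine le_trans (ENNReal.tsum_le_tsum fun b => hdom2 b) (master _ ?_)
      simp
    calc ∑' α : {a : Fin 3 → ℤ // 0 < znorm a ∧ znorm a ≤ 2 * K}, ENNReal.ofReal (D2 α.1)
        ≤ ∑' n : ℕ, 54 * (n : ℝ≥0∞) ^ 2 *
            (ENNReal.ofReal c2 * (if 1 ≤ n ∧ n ≤ M2 then ((n : ℝ≥0∞) ^ 2)⁻¹ else 0)) :=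
          le_trans hstep1 (le_of_eq hstep2 |>.trans hstep3)
      _ = ENNReal.ofReal c2 * ∑' n : ℕ, 54 * (n : ℝ≥0∞) ^ 2 *
            (if 1 ≤ n ∧ n ≤ M2 then ((n : ℝ≥0∞) ^ 2)⁻¹ else 0) := by
          rw [← ENNReal.tsum_mul_left]
          exact tsum_congr fun n => by ring
      _ ≤ ENNReal.ofReal c2 * (54 * (M2 : ℝ≥0∞)) := mul_le_mul' le_rfl (sumB M2)
      _ ≤ ENNReal.ofReal (108 * ε ^ 2) := by
          rw [show ((M2 : ℝ≥0∞)) = ENNReal.ofReal (M2 : ℝ) from (ENNReal.ofReal_natCast M2).symm,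
            show ((54 : ℝ≥0∞)) = ENNReal.ofReal 54 from (ENNReal.ofReal_ofNat 54).symm,
            ← ENNReal.ofReal_mul (by norm_num : (0:ℝ) ≤ 54), ← ENNReal.ofReal_mul hc2]
          refine ENNReal.ofReal_le_ofReal ?_
          calc c2 * (54 * (M2 : ℝ)) ≤ c2 * (54 * K) := by
                refine mul_le_mul_of_nonneg_left ?_ hc2
                exact mul_le_mul_of_nonneg_left hM2K (by norm_num)
            _ = 108 * ε ^ 2 := by
                rw [hc2def]
                field_simp
                ring
  calc ∑' α : {a : Fin 3 → ℤ // 0 < znorm a ∧ znorm a ≤ 2 * K},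
        ENNReal.ofReal (znorm α.1 * ‖u α.1‖ * ‖u (k - α.1)‖)
      ≤ ∑' α : {a : Fin 3 → ℤ // 0 < znorm a ∧ znorm a ≤ 2 * K},
          (ENNReal.ofReal (D1 α.1) + ENNReal.ofReal (D2 α.1)) := by
        refine ENNReal.tsum_le_tsum fun α => ?_
        have h := hpt1 α.1 α.2.1 α.2.2
        calc ENNReal.ofReal (znorm α.1 * ‖u α.1‖ * ‖u (k - α.1)‖)
            ≤ ENNReal.ofReal (D1 α.1 + D2 α.1) := ENNReal.ofReal_le_ofReal h
          _ = ENNReal.ofReal (D1 α.1) + ENNReal.ofReal (D2 α.1) :=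
              ENNReal.ofReal_add (hD1nn _) (hD2nn _)
    _ = (∑' α : {a : Fin 3 → ℤ // 0 < znorm a ∧ znorm a ≤ 2 * K}, ENNReal.ofReal (D1 α.1))
        + ∑' α : {a : Fin 3 → ℤ // 0 < znorm a ∧ znorm a ≤ 2 * K}, ENNReal.ofReal (D2 α.1) :=
        ENNReal.tsum_add
    _ ≤ ENNReal.ofReal (864 * ε ^ 2) + ENNReal.ofReal (108 * ε ^ 2) :=
        add_le_add hchainD1 hchainD2
    _ = ENNReal.ofReal (972 * ε ^ 2) := by
        rw [← ENNReal.ofReal_add (by positivity) (by positivity)]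
        congr 1
        ring


end Chains

end NLB

/-- There is a constant `C > 0` such that for every `ε > 0`, every `u : ℤ³ → ℂ` with
`u 0 = 0` and `|u α| ≤ ε/|α|²` for `α ≠ 0`, and every `k ≠ 0`, the nonlinear-term bound
`∑_{0 < |α| ≤ 2|k|} |α|·|u α|·|u (k−α)| + |k|·∑_{|α| > 2|k|} |u α|·|u (k−α)| ≤ C·ε²`
holds (the second sum converging). -/
theorem nonlinear_term_bound :
    ∃ C : ℝ, 0 < C ∧
      ∀ (ε : ℝ), 0 < ε →
        ∀ (u : (Fin 3 → ℤ) → ℂ), u 0 = 0 →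
          (∀ α : Fin 3 → ℤ, α ≠ 0 → ‖u α‖ ≤ ε / (znorm α) ^ 2) →
          ∀ k : Fin 3 → ℤ, k ≠ 0 →
            Summable (fun α : {a : Fin 3 → ℤ // 2 * znorm k < znorm a} =>
              ‖u α.1‖ * ‖u (k - α.1)‖) ∧
            (∑' α : {a : Fin 3 → ℤ // 0 < znorm a ∧ znorm a ≤ 2 * znorm k},
                znorm α.1 * ‖u α.1‖ * ‖u (k - α.1)‖)
              + znorm k * (∑' α : {a : Fin 3 → ℤ // 2 * znorm k < znorm a},
                ‖u α.1‖ * ‖u (k - α.1)‖)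
              ≤ C * ε ^ 2 := by
  refine ⟨2000, by norm_num, ?_⟩
  intro ε hε u hu0 hub k hk
  have hK1 : 1 ≤ znorm k := NLB.one_le_znorm hk
  have hK0 : 0 < znorm k := lt_of_lt_of_le one_pos hK1
  have hub' : ∀ α, ‖u α‖ ≤ ε / znorm α ^ 2 := by
    intro α
    by_cases hα : α = 0
    · rw [hα, hu0, NLB.znorm_zero]
      norm_num
    · exact hub α hα
  have key1 := NLB.chain1 (u := u) (k := k) hε hk hu0 hub'
  have key2 := NLB.chain2 (u := u) (k := k) hε hk hub'
  have h2 := NLB.conv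
      (fun α : {a : Fin 3 → ℤ // 2 * znorm k < znorm a} =>
        znorm k * (‖u α.1‖ * ‖u (k - α.1)‖))
      (fun α => mul_nonneg hK0.le (mul_nonneg (norm_nonneg _) (norm_nonneg _)))
      (by positivity : (0:ℝ) ≤ 432 * ε ^ 2) key2
  have h1 := NLB.conv
      (fun α : {a : Fin 3 → ℤ // 0 < znorm a ∧ znorm a ≤ 2 * znorm k} =>
        znorm α.1 * ‖u α.1‖ * ‖u (k - α.1)‖)
      (fun α => mul_nonneg (mul_nonneg (NLB.znorm_nonneg _) (norm_nonneg _)) (norm_nonneg _))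
      (by positivity : (0:ℝ) ≤ 972 * ε ^ 2) key1
  constructor
  · have hs := h2.1
    refine (hs.mul_left (znorm k)⁻¹).congr fun α => ?_
    rw [← mul_assoc, inv_mul_cancel₀ hK0.ne', one_mul]
  · have hle1 := h1.2
    have hle2 := h2.2
    have hmul : znorm k * (∑' α : {a : Fin 3 → ℤ // 2 * znorm k < znorm a},
          ‖u α.1‖ * ‖u (k - α.1)‖)
        = ∑' α : {a : Fin 3 → ℤ // 2 * znorm k < znorm a},
            znorm k * (‖u α.1‖ * ‖u (k - α.1)‖) := tsum_mul_left.symm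
    rw [hmul]
    nlinarith [sq_nonneg ε, hle1, hle2]
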